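/- Unbounded dynamics (Theorem 2): if C, L, T : [t₀, ∞) → ℝ are differentiable, satisfy the system C' = ρ_C(T+L+C)C − C/τ_C − αC², L' = ρ_L L − αLC, T' = −αTC, have C(t₀) > 0, L(t₀) > 0, T(t₀) > 0, and if ρ_C > α and (ρ_C − α)·τ_C·S(t₀) > 1 where S = C + L + T, then S(t) → ∞ as t → ∞. -/

import Mathlib

open Set Filter

/-- Monotonicity on `Icc` from nonnegative derivative. -/
private lemma my_mono_Icc {a b : ℝ} {f f' : ℝ → ℝ}
    (hf : ∀ t ∈ Set.Icc a b, HasDerivAt f (f' t) t)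
    (h0 : ∀ t ∈ Set.Ioo a b, 0 ≤ f' t) : MonotoneOn f (Set.Icc a b) := by
  apply monotoneOn_of_hasDerivWithinAt_nonneg (convex_Icc a b)
    (f' := f')
  · exact fun t ht => (hf t ht).continuousAt.continuousWithinAt
  · intro x hx
    rw [interior_Icc] at hx
    exact ((hf x (Set.Ioo_subset_Icc_self hx)).hasDerivWithinAt)
  · intro x hx
    rw [interior_Icc] at hx
    exact h0 x hx

/-- Positivity is preserved for solutions of linear-type scalar ODEs `x' = g·x`. -/
private lemma my_pos_of_linearODE (t₀ : ℝ) {x g : ℝ → ℝ}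
    (hg : ContinuousOn g (Set.Ici t₀))
    (hx : ∀ t ∈ Set.Ici t₀, HasDerivAt x (g t * x t) t)
    (h0 : 0 < x t₀) : ∀ t ∈ Set.Ici t₀, 0 < x t := by
  intro b hb
  by_contra hxb
  push_neg at hxb
  set Z : Set ℝ := {t ∈ Set.Icc t₀ b | x t ≤ 0} with hZ
  have hxc : ContinuousOn x (Set.Icc t₀ b) := fun t ht =>
    (hx t (Set.Icc_subset_Ici_self ht)).continuousAt.continuousWithinAt
  have hZc : IsClosed Z :=
    hxc.preimage_isClosed_of_isClosed isClosed_Icc isClosed_Iic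
  have hZne : Z.Nonempty := ⟨b, ⟨hb, le_refl b⟩, hxb⟩
  have hZbdd : BddBelow Z := ⟨t₀, fun t ht => ht.1.1⟩
  set s := sInf Z with hs
  have hsZ : s ∈ Z := hZc.csInf_mem hZne hZbdd
  obtain ⟨⟨hts, hsb⟩, hxs⟩ := hsZ
  -- x > 0 on [t₀, s)
  have hpos : ∀ t ∈ Set.Ico t₀ s, 0 < x t := by
    intro t ht
    by_contra h
    push_neg at h
    have : t ∈ Z := ⟨⟨ht.1, le_trans ht.2.le hsb⟩, h⟩
    exact absurd (csInf_le hZbdd this) (not_le_of_gt ht.2)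
  -- bound on g on the compact [t₀, s]
  obtain ⟨u, hu, hmin⟩ := (isCompact_Icc (a := t₀) (b := s)).exists_isMinOn
    ⟨t₀, le_refl _, hts⟩ (hg.mono (fun t ht => ht.1))
  set K : ℝ := -g u with hK
  have hgK : ∀ t ∈ Set.Icc t₀ s, 0 ≤ g t + K := by
    intro t ht
    have h' : g u ≤ g t := hmin ht
    simp only [hK]; linarith
  -- y = x * exp(K t) is monotone on [t₀, s]
  set y : ℝ → ℝ := fun t => x t * Real.exp (K * t) with hy
  have hyd : ∀ t ∈ Set.Icc t₀ s, HasDerivAt y ((g t + K) * x t * Real.exp (K * t)) t := by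
    intro t ht
    have h1 : HasDerivAt (fun t => Real.exp (K * t)) (Real.exp (K * t) * K) t := by
      simpa using ((hasDerivAt_id t).const_mul K).exp
    have h2 := (hx t (le_trans ht.1 (le_refl t))).fun_mul h1
    exact h2.congr_deriv (by ring)
  have hmono : MonotoneOn y (Set.Icc t₀ s) := by
    apply my_mono_Icc hyd
    intro t ht
    have ht' : t ∈ Set.Icc t₀ s := Set.Ioo_subset_Icc_self ht
    have hx' : 0 < x t := hpos t ⟨ht.1.le, ht.2⟩
    have := hgK t ht'
    positivity
  have h1 : y t₀ ≤ y s := hmono ⟨le_refl _, hts⟩ ⟨hts, le_refl _⟩ hts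
  have h2 : 0 < y t₀ := by positivity
  have h3 : y s ≤ 0 := by
    have := Real.exp_pos (K * s)
    simp only [hy]
    nlinarith
  linarith

/-- **Theorem 2.** Unbounded dynamics: under the instability
hypotheses `ρ_C > α` and `(ρ_C − α)·τ_C·S(t₀) > 1`, the total population
`S = C + L + T` tends to infinity as `t → ∞`. -/
theorem carT_total_population_unbounded
    (ρC ρL α τC : ℝ) (hρC : 0 < ρC) (hρL : 0 < ρL) (hα : 0 < α) (hτC : 0 < τC)
    (t₀ : ℝ) (C L T S : ℝ → ℝ)
    (hS : S = fun t => C t + L t + T t)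
    (hC : ∀ t ∈ Set.Ici t₀,
      HasDerivAt C (ρC * (T t + L t + C t) * C t - C t / τC - α * (C t) ^ 2) t)
    (hL : ∀ t ∈ Set.Ici t₀, HasDerivAt L (ρL * L t - α * L t * C t) t)
    (hT : ∀ t ∈ Set.Ici t₀, HasDerivAt T (-(α * T t * C t)) t)
    (hC0 : 0 < C t₀) (hL0 : 0 < L t₀) (hT0 : 0 < T t₀)
    (hunstable1 : ρC > α)
    (hunstable2 : (ρC - α) * τC * S t₀ > 1) :
    Filter.Tendsto S Filter.atTop Filter.atTop := by
  have hρα : 0 < ρC - α := sub_pos.2 hunstable1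
  -- continuity
  have hCc : ContinuousOn C (Set.Ici t₀) := fun t ht =>
    (hC t ht).continuousAt.continuousWithinAt
  have hLc : ContinuousOn L (Set.Ici t₀) := fun t ht =>
    (hL t ht).continuousAt.continuousWithinAt
  have hTc : ContinuousOn T (Set.Ici t₀) := fun t ht =>
    (hT t ht).continuousAt.continuousWithinAt
  -- positivity of C, L, T
  have hCpos : ∀ t ∈ Set.Ici t₀, 0 < C t := by
    apply my_pos_of_linearODE t₀ (g := fun t => ρC * (T t + L t + C t) - 1/τC - α * C t)
    · exact ((continuousOn_const.mul ((hTc.add hLc).add hCc)).sub continuousOn_const).sub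
        (continuousOn_const.mul hCc)
    · intro t ht
      have h := hC t ht
      convert h using 1
      field_simp
    · exact hC0
  have hLpos : ∀ t ∈ Set.Ici t₀, 0 < L t := by
    apply my_pos_of_linearODE t₀ (g := fun t => ρL - α * C t)
    · exact continuousOn_const.sub (continuousOn_const.mul hCc)
    · intro t ht
      have h := hL t ht
      convert h using 1
      ring
    · exact hL0
  have hTpos : ∀ t ∈ Set.Ici t₀, 0 < T t := by
    apply my_pos_of_linearODE t₀ (g := fun t => -(α * C t))
    · exact (continuousOn_const.mul hCc).neg
    · intro t ht
      have h := hT t ht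
      convert h using 1
      ring
    · exact hT0
  -- derivative of S
  have hSd : ∀ t ∈ Set.Ici t₀,
      HasDerivAt S (((ρC - α) * S t - 1/τC) * C t + ρL * L t) t := by
    intro t ht
    have h := ((hC t ht).add (hL t ht)).add (hT t ht)
    have hSt : S t = C t + L t + T t := by rw [hS]
    have h' : HasDerivAt S (ρC * (T t + L t + C t) * C t - C t / τC - α * (C t) ^ 2
        + (ρL * L t - α * L t * C t) + -(α * T t * C t)) t := by
      rw [hS]; exact h
    convert h' using 1
    rw [hSt]
    field_simp
    ring
  -- instability parameter
  set δ : ℝ := (ρC - α) * S t₀ - 1/τC with hδdef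
  have hδ : 0 < δ := by
    rw [hδdef, sub_pos, div_lt_iff₀ hτC]
    calc 1 < (ρC - α) * τC * S t₀ := hunstable2
      _ = (ρC - α) * S t₀ * τC := by ring
  have hSt₀ : 1/τC < (ρC - α) * S t₀ := by
    have := hδ
    rw [hδdef, sub_pos] at this
    exact this
  -- the region S > θ := (1/τC)/(ρC-α) is forward invariant
  set θ : ℝ := (1/τC) / (ρC - α) with hθdef
  have hθlt : θ < S t₀ := by
    rw [hθdef, div_lt_iff₀ hρα]
    linarith [hSt₀, mul_comm (S t₀) (ρC - α)]
  have step1 : ∀ b ∈ Set.Ici t₀, ∀ t ∈ Set.Icc t₀ b, θ < S t := by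
    intro b hb t htb
    by_contra hcon
    push_neg at hcon
    set Z : Set ℝ := {t ∈ Set.Icc t₀ b | S t ≤ θ} with hZ
    have hSc : ContinuousOn S (Set.Icc t₀ b) := by
      intro u hu
      exact (hSd u (Set.Icc_subset_Ici_self hu)).continuousAt.continuousWithinAt
    have hZc : IsClosed Z := hSc.preimage_isClosed_of_isClosed isClosed_Icc isClosed_Iic
    have hZne : Z.Nonempty := ⟨t, htb, hcon⟩
    have hZbdd : BddBelow Z := ⟨t₀, fun u hu => hu.1.1⟩
    set s := sInf Z with hs
    have hsZ : s ∈ Z := hZc.csInf_mem hZne hZbdd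
    obtain ⟨⟨hts, hsb⟩, hSs⟩ := hsZ
    have hgt : ∀ u ∈ Set.Ico t₀ s, θ < S u := by
      intro u hu
      by_contra h
      push_neg at h
      have : u ∈ Z := ⟨⟨hu.1, hu.2.le.trans hsb⟩, h⟩
      exact absurd (csInf_le hZbdd this) (not_le_of_gt hu.2)
    have hmono : MonotoneOn S (Set.Icc t₀ s) := by
      apply my_mono_Icc (f' := fun u => ((ρC - α) * S u - 1/τC) * C u + ρL * L u)
      · intro u hu; exact hSd u (le_trans hu.1 (le_refl u))
      · intro u hu
        have hu' : u ∈ Set.Ici t₀ := hu.1.le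
        have h1 : θ < S u := hgt u ⟨hu.1.le, hu.2⟩
        have h2 : 0 < C u := hCpos u hu'
        have h3 : 0 < L u := hLpos u hu'
        have h4 : 0 ≤ (ρC - α) * S u - 1/τC := by
          rw [hθdef, div_lt_iff₀ hρα] at h1
          nlinarith
        nlinarith
    have := hmono ⟨le_refl _, hts⟩ ⟨hts, le_refl _⟩ hts
    linarith
  -- S is nondecreasing, hence S t ≥ S t₀
  have step2 : ∀ b ∈ Set.Ici t₀, S t₀ ≤ S b := by
    intro b hb
    have hmono : MonotoneOn S (Set.Icc t₀ b) := by
      apply my_mono_Icc (f' := fun u => ((ρC - α) * S u - 1/τC) * C u + ρL * L u)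
      · intro u hu; exact hSd u hu.1
      · intro u hu
        have hu' : u ∈ Set.Ici t₀ := hu.1.le
        have h1 : θ < S u := step1 b hb u (Set.Ioo_subset_Icc_self hu)
        have h2 : 0 < C u := hCpos u hu'
        have h3 : 0 < L u := hLpos u hu'
        have h4 : 0 ≤ (ρC - α) * S u - 1/τC := by
          rw [hθdef, div_lt_iff₀ hρα] at h1
          nlinarith
        nlinarith
    exact hmono ⟨le_refl _, hb⟩ ⟨hb, le_refl _⟩ hb
  -- exponential growth of C: w = C·exp(-δt) is monotone
  set w : ℝ → ℝ := fun t => C t * Real.exp (-δ * t) with hw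
  have hwd : ∀ t ∈ Set.Ici t₀, HasDerivAt w
      ((ρC * (T t + L t + C t) * C t - C t / τC - α * (C t) ^ 2 - δ * C t)
        * Real.exp (-δ * t)) t := by
    intro t ht
    have h1 : HasDerivAt (fun u => Real.exp (-δ * u)) (Real.exp (-δ * t) * (-δ)) t := by
      simpa using ((hasDerivAt_id t).const_mul (-δ)).exp
    have h2 := (hC t ht).fun_mul h1
    exact h2.congr_deriv (by ring)
  have hCgrow : ∀ b ∈ Set.Ici t₀, C t₀ * Real.exp (δ * (b - t₀)) ≤ C b := by
    intro b hb
    have hmono : MonotoneOn w (Set.Icc t₀ b) := by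
      apply my_mono_Icc (f' := fun t =>
        (ρC * (T t + L t + C t) * C t - C t / τC - α * (C t) ^ 2 - δ * C t)
          * Real.exp (-δ * t))
      · intro u hu; exact hwd u hu.1
      · intro u hu
        have hu' : u ∈ Set.Ici t₀ := hu.1.le
        have h2 : 0 < C u := hCpos u hu'
        have h3 : 0 < L u := hLpos u hu'
        have h4 : 0 < T u := hTpos u hu'
        have h5 : S t₀ ≤ S u := step2 u hu'
        have hSu : S u = C u + L u + T u := by rw [hS]
        have hexp : 0 < Real.exp (-δ * u) := Real.exp_pos _
        have key : 0 ≤ ρC * (T u + L u + C u) * C u - C u / τC - α * (C u) ^ 2 - δ * C u := by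
          have hCS : C u ≤ S u := by rw [hSu]; linarith
          have e1 : ρC * (T u + L u + C u) = ρC * S u := by rw [hSu]; ring
          rw [e1]
          have e2 : ρC * S u * C u - C u / τC - α * (C u) ^ 2 - δ * C u
              = C u * ((ρC - α) * S u - 1/τC - δ) + α * C u * (S u - C u) := by
            field_simp; ring
          rw [e2]
          have e3 : 0 ≤ (ρC - α) * S u - 1/τC - δ := by
            have : (ρC - α) * S t₀ ≤ (ρC - α) * S u :=
              mul_le_mul_of_nonneg_left h5 hρα.le
            rw [hδdef]; linarith
          have e4 : 0 ≤ S u - C u := by linarith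
          positivity
        positivity
    have h1 : w t₀ ≤ w b := hmono ⟨le_refl _, hb⟩ ⟨hb, le_refl _⟩ hb
    simp only [hw] at h1
    have key : (C t₀ * Real.exp (-δ * t₀)) * Real.exp (δ * b)
        = C t₀ * Real.exp (δ * (b - t₀)) := by
      rw [mul_assoc, ← Real.exp_add]; congr 1; ring
    have key2 : (C b * Real.exp (-δ * b)) * Real.exp (δ * b) = C b := by
      rw [mul_assoc, ← Real.exp_add]
      have h0 : -δ * b + δ * b = 0 := by ring
      rw [h0, Real.exp_zero, mul_one]
    calc C t₀ * Real.exp (δ * (b - t₀))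
        = (C t₀ * Real.exp (-δ * t₀)) * Real.exp (δ * b) := key.symm
      _ ≤ (C b * Real.exp (-δ * b)) * Real.exp (δ * b) :=
          mul_le_mul_of_nonneg_right h1 (Real.exp_pos _).le
      _ = C b := key2
  -- conclude
  have hSgrow : ∀ b ∈ Set.Ici t₀, C t₀ * Real.exp (δ * (b - t₀)) ≤ S b := by
    intro b hb
    have := hCgrow b hb
    have hSb : S b = C b + L b + T b := by rw [hS]
    have := hLpos b hb
    have := hTpos b hb
    linarith
  have htend : Filter.Tendsto (fun b => C t₀ * Real.exp (δ * (b - t₀)))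
      Filter.atTop Filter.atTop := by
    apply Filter.Tendsto.const_mul_atTop hC0
    apply Real.tendsto_exp_atTop.comp
    apply Filter.Tendsto.const_mul_atTop hδ
    exact tendsto_atTop_add_const_right _ (-t₀) tendsto_id
  apply Filter.tendsto_atTop_mono' _ _ htend
  filter_upwards [Filter.eventually_ge_atTop t₀] with b hb
  exact hSgrow b hb
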